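/- Let f be μ-strongly convex and L-smooth, x_1,...,x_N ∈ R^d with average x̄, and η ∈ (0, 1/L]. Then ∑_{i=1}^N ‖x_i − η∇f(x_i) − (x̄ − η ḡ)‖² ≤ (1 − ημ + η²μL) ∑_{i=1}^N ‖x_i − x̄‖², where ḡ = (1/N)∑_i ∇f(x_i). -/

import Mathlib

open Finset

section Aux

variable {H : Type*} [NormedAddCommGroup H] [InnerProductSpace ℝ H] [CompleteSpace H]

local notation "⟪" x ", " y "⟫" => @inner ℝ _ _ x y

variable {f : H → ℝ} {L μ : ℝ}

lemma aux_grad_deriv (hdiff : ContDiff ℝ 1 f) (x y : H) (t : ℝ) :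
    HasDerivAt (fun t : ℝ => f (x + t • (y - x)))
      ⟪gradient f (x + t • (y - x)), y - x⟫ t := by
  have hdf : DifferentiableAt ℝ f (x + t • (y - x)) := (hdiff.differentiable one_ne_zero) _
  have hF : HasFDerivAt f (InnerProductSpace.toDual ℝ H (gradient f (x + t • (y - x))))
      (x + t • (y - x)) := hdf.hasGradientAt.hasFDerivAt
  have hc : HasDerivAt (fun t : ℝ => x + t • (y - x)) (y - x) t := by
    simpa using ((hasDerivAt_id t).smul_const (y - x)).const_add x
  have h := hF.comp_hasDerivAt t hc
  rw [InnerProductSpace.toDual_apply_apply] at h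
  exact h

lemma aux_grad_cont (hdiff : ContDiff ℝ 1 f) : Continuous (gradient f) := by
  have h : Continuous (fderiv ℝ f) := hdiff.continuous_fderiv one_ne_zero
  exact (InnerProductSpace.toDual ℝ H).symm.continuous.comp h

/-- Descent lemma. -/
lemma aux_descent (hdiff : ContDiff ℝ 1 f) (hL : 0 < L)
    (hlip : ∀ x y, ‖gradient f x - gradient f y‖ ≤ L * ‖x - y‖) (x y : H) :
    f y ≤ f x + ⟪gradient f x, y - x⟫ + L / 2 * ‖y - x‖ ^ 2 := by
  set g' : ℝ → ℝ := fun t => ⟪gradient f (x + t • (y - x)), y - x⟫ with hg'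
  have hcont : Continuous g' := by
    apply Continuous.inner
    · exact (aux_grad_cont hdiff).comp (by continuity)
    · exact continuous_const
  have key : (∫ t in (0:ℝ)..1, g' t) = f y - f x := by
    have h := intervalIntegral.integral_eq_sub_of_hasDerivAt
      (f := fun t : ℝ => f (x + t • (y - x))) (f' := g')
      (fun t _ => aux_grad_deriv hdiff x y t)
      (hcont.intervalIntegrable 0 1)
    simpa using h
  have hcont2 : Continuous fun t : ℝ =>
      ⟪gradient f x, y - x⟫ + L * ‖y - x‖ ^ 2 * t := by continuity
  have mono : (∫ t in (0:ℝ)..1, g' t) ≤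
      ∫ t in (0:ℝ)..1, (⟪gradient f x, y - x⟫ + L * ‖y - x‖ ^ 2 * t) := by
    apply intervalIntegral.integral_mono_on zero_le_one (hcont.intervalIntegrable 0 1)
      (hcont2.intervalIntegrable 0 1)
    intro t ht
    have h2 : ⟪gradient f (x + t • (y - x)) - gradient f x, y - x⟫
        ≤ L * ‖y - x‖ ^ 2 * t := by
      calc ⟪gradient f (x + t • (y - x)) - gradient f x, y - x⟫
          ≤ ‖gradient f (x + t • (y - x)) - gradient f x‖ * ‖y - x‖ :=
            real_inner_le_norm _ _
        _ ≤ (L * ‖x + t • (y - x) - x‖) * ‖y - x‖ := by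
            apply mul_le_mul_of_nonneg_right (hlip _ _) (norm_nonneg _)
        _ = L * (|t| * ‖y - x‖) * ‖y - x‖ := by
            rw [add_sub_cancel_left, norm_smul, Real.norm_eq_abs]
        _ = L * ‖y - x‖ ^ 2 * t := by rw [abs_of_nonneg ht.1]; ring
    have h1 : g' t - ⟪gradient f x, y - x⟫
        = ⟪gradient f (x + t • (y - x)) - gradient f x, y - x⟫ := by
      simp [hg', inner_sub_left]
    linarith
  have icalc : (∫ t in (0:ℝ)..1, (⟪gradient f x, y - x⟫ + L * ‖y - x‖ ^ 2 * t))
      = ⟪gradient f x, y - x⟫ + L / 2 * ‖y - x‖ ^ 2 := by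
    rw [intervalIntegral.integral_add (intervalIntegrable_const)
      ((show Continuous fun t : ℝ => L * ‖y - x‖ ^ 2 * t from continuous_const.mul continuous_id').intervalIntegrable 0 1),
      intervalIntegral.integral_const, intervalIntegral.integral_const_mul, integral_id]
    simp
    ring
  linarith

/-- One-sided lower bound with gradient-norm term. -/
lemma aux_half (hdiff : ContDiff ℝ 1 f) (hL : 0 < L) (hμ : 0 < μ)
    (hlip : ∀ x y, ‖gradient f x - gradient f y‖ ≤ L * ‖x - y‖)
    (hsc : ∀ x y, f x + ⟪gradient f x, y - x⟫ + (μ / 2) * ‖x - y‖ ^ 2 ≤ f y)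
    (a b : H) :
    f a + ⟪gradient f a, b - a⟫ + L⁻¹ / 2 * ‖gradient f b - gradient f a‖ ^ 2 ≤ f b := by
  set v := gradient f b - gradient f a with hv
  set z := b - L⁻¹ • v with hz
  have h1 : f a + ⟪gradient f a, z - a⟫ ≤ f z := by
    have h := hsc a z
    nlinarith [sq_nonneg ‖a - z‖, hμ.le]
  have h2 : f z ≤ f b + ⟪gradient f b, z - b⟫ + L / 2 * ‖z - b‖ ^ 2 :=
    aux_descent hdiff hL hlip b z
  have e1 : z - b = -(L⁻¹ • v) := by rw [hz]; abel
  have e2 : ⟪gradient f b, z - b⟫ = -(L⁻¹ * ⟪gradient f b, v⟫) := by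
    rw [e1, inner_neg_right, real_inner_smul_right]
  have e3 : L / 2 * ‖z - b‖ ^ 2 = L⁻¹ / 2 * ‖v‖ ^ 2 := by
    rw [e1, norm_neg, norm_smul, Real.norm_eq_abs, abs_of_nonneg (by positivity : (0:ℝ) ≤ L⁻¹),
      mul_pow]
    field_simp
  have e4 : ⟪gradient f a, z - a⟫ = ⟪gradient f a, b - a⟫ - L⁻¹ * ⟪gradient f a, v⟫ := by
    have hz' : z - a = (b - a) - L⁻¹ • v := by rw [hz]; abel
    rw [hz', inner_sub_right, real_inner_smul_right]
  have e5 : ⟪gradient f b, v⟫ - ⟪gradient f a, v⟫ = ‖v‖ ^ 2 := by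
    rw [← inner_sub_left, ← hv, real_inner_self_eq_norm_sq]
  have e6 : L⁻¹ * ⟪gradient f b, v⟫ - L⁻¹ * ⟪gradient f a, v⟫ = L⁻¹ * ‖v‖ ^ 2 := by
    rw [← mul_sub, e5]
  linarith

/-- Co-coercivity. -/
lemma aux_coco (hdiff : ContDiff ℝ 1 f) (hL : 0 < L) (hμ : 0 < μ)
    (hlip : ∀ x y, ‖gradient f x - gradient f y‖ ≤ L * ‖x - y‖)
    (hsc : ∀ x y, f x + ⟪gradient f x, y - x⟫ + (μ / 2) * ‖x - y‖ ^ 2 ≤ f y)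
    (x y : H) :
    L⁻¹ * ‖gradient f x - gradient f y‖ ^ 2 ≤ ⟪gradient f x - gradient f y, x - y⟫ := by
  have h1 := aux_half hdiff hL hμ hlip hsc x y
  have h2 := aux_half hdiff hL hμ hlip hsc y x
  have e0 : ‖gradient f x - gradient f y‖ = ‖gradient f y - gradient f x‖ := norm_sub_rev _ _
  have key : ⟪gradient f x - gradient f y, x - y⟫
      = -⟪gradient f x, y - x⟫ - ⟪gradient f y, x - y⟫ := by
    rw [inner_sub_left, show (x - y : H) = -(y - x) by abel, inner_neg_right, inner_neg_right]
  rw [key, e0]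
  rw [e0] at h2
  linarith

/-- Strong monotonicity. -/
lemma aux_mono (hμ : 0 < μ)
    (hsc : ∀ x y, f x + ⟪gradient f x, y - x⟫ + (μ / 2) * ‖x - y‖ ^ 2 ≤ f y)
    (x y : H) :
    μ * ‖x - y‖ ^ 2 ≤ ⟪gradient f x - gradient f y, x - y⟫ := by
  have h1 := hsc x y
  have h2 := hsc y x
  have e0 : ‖y - x‖ = ‖x - y‖ := norm_sub_rev _ _
  have key : ⟪gradient f x - gradient f y, x - y⟫
      = -⟪gradient f x, y - x⟫ - ⟪gradient f y, x - y⟫ := by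
    rw [inner_sub_left, show (x - y : H) = -(y - x) by abel, inner_neg_right, inner_neg_right]
  rw [key]
  rw [e0] at h2
  linarith

end Aux

theorem consensus_contraction (d N : ℕ) (hN : 1 ≤ N)
    (f : EuclideanSpace ℝ (Fin d) → ℝ) (L μ : ℝ) (hL : 0 < L) (hμ : 0 < μ)
    (hdiff : ContDiff ℝ 1 f)
    (hlip : ∀ x y, ‖gradient f x - gradient f y‖ ≤ L * ‖x - y‖)
    (hsc : ∀ x y, f x + inner ℝ (gradient f x) (y - x) + (μ / 2) * ‖x - y‖ ^ 2 ≤ f y)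
    (η : ℝ) (hη0 : 0 < η) (hη1 : η ≤ 1 / L)
    (x : Fin N → EuclideanSpace ℝ (Fin d)) :
    ∑ i, ‖(x i - η • gradient f (x i)) -
        ((N : ℝ)⁻¹ • ∑ j, x j - η • (N : ℝ)⁻¹ • ∑ j, gradient f (x j))‖ ^ 2 ≤
      (1 - η * μ + η ^ 2 * μ * L) * ∑ i, ‖x i - (N : ℝ)⁻¹ • ∑ j, x j‖ ^ 2 := by
  have hNpos : (0:ℝ) < (N:ℝ) := by exact_mod_cast hN
  set xbar : EuclideanSpace ℝ (Fin d) := (N : ℝ)⁻¹ • ∑ j, x j with hxbar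
  set gbar : EuclideanSpace ℝ (Fin d) := (N : ℝ)⁻¹ • ∑ j, gradient f (x j) with hgbar
  set b : EuclideanSpace ℝ (Fin d) := gradient f xbar with hb
  set u : Fin N → EuclideanSpace ℝ (Fin d) := fun i => x i - xbar with hu
  set w : Fin N → EuclideanSpace ℝ (Fin d) := fun i => gradient f (x i) - gbar with hw
  set v : Fin N → EuclideanSpace ℝ (Fin d) := fun i => gradient f (x i) - b with hv
  have cancel : ∀ S : EuclideanSpace ℝ (Fin d), (N:ℝ) • ((N:ℝ)⁻¹ • S) = S := fun S => by
    rw [smul_smul, mul_inv_cancel₀ (ne_of_gt hNpos), one_smul]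
  have hcard : (Finset.univ : Finset (Fin N)).card = N := Finset.card_fin N
  have hsum_u : ∑ i, u i = 0 := by
    simp only [hu]
    rw [Finset.sum_sub_distrib, Finset.sum_const, hcard, hxbar,
      ← Nat.cast_smul_eq_nsmul ℝ, cancel, sub_self]
  have hsum_w : ∑ i, w i = 0 := by
    simp only [hw]
    rw [Finset.sum_sub_distrib, Finset.sum_const, hcard, hgbar,
      ← Nat.cast_smul_eq_nsmul ℝ, cancel, sub_self]
  -- rewrite the left-hand side summand
  have hterm : ∀ i, (x i - η • gradient f (x i)) -
      (xbar - η • gbar) = u i - η • w i := by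
    intro i
    simp only [hu, hw, smul_sub]
    abel
  have expand : ∀ i, ‖u i - η • w i‖ ^ 2
      = ‖u i‖ ^ 2 - 2 * η * (inner ℝ (u i) (w i) : ℝ) + η ^ 2 * ‖w i‖ ^ 2 := by
    intro i
    rw [norm_sub_sq_real, real_inner_smul_right, norm_smul, Real.norm_eq_abs, mul_pow, sq_abs]
    ring
  set U : ℝ := ∑ i, ‖u i‖ ^ 2 with hU
  set A : ℝ := ∑ i, (inner ℝ (u i) (v i) : ℝ) with hA
  set B : ℝ := ∑ i, ‖v i‖ ^ 2 with hB
  -- ∑ ⟪u i, w i⟫ = A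
  have hAeq : ∑ i, (inner ℝ (u i) (w i) : ℝ) = A := by
    have hwv : ∀ i, w i = v i + (b - gbar) := by intro i; simp only [hw, hv]; abel
    rw [hA]
    have : ∀ i, (inner ℝ (u i) (w i) : ℝ)
        = (inner ℝ (u i) (v i) : ℝ) + (inner ℝ (u i) (b - gbar) : ℝ) := by
      intro i; rw [hwv i, inner_add_right]
    rw [Finset.sum_congr rfl fun i _ => this i, Finset.sum_add_distrib,
      ← sum_inner, hsum_u]
    simp
  -- ∑ ‖w i‖² ≤ B
  have hBle : ∑ i, ‖w i‖ ^ 2 ≤ B := by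
    have hvw : ∀ i, v i = w i + (gbar - b) := by intro i; simp only [hw, hv]; abel
    have : B = ∑ i, ‖w i‖ ^ 2 + ((N:ℝ) * ‖gbar - b‖ ^ 2) := by
      rw [hB, Finset.sum_congr rfl fun i _ => by rw [hvw i, norm_add_sq_real]]
      rw [Finset.sum_add_distrib, Finset.sum_add_distrib, ← Finset.mul_sum, ← sum_inner, hsum_w]
      simp [hcard, mul_comm]
    rw [this]
    nlinarith [sq_nonneg ‖gbar - b‖, hNpos]
  -- per-index lower bounds
  have hmono : ∀ i, μ * ‖u i‖ ^ 2 ≤ (inner ℝ (u i) (v i) : ℝ) := by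
    intro i
    have h := aux_mono hμ hsc (x i) xbar
    rwa [real_inner_comm] at h
  have hcoco : ∀ i, L⁻¹ * ‖v i‖ ^ 2 ≤ (inner ℝ (u i) (v i) : ℝ) := by
    intro i
    have h := aux_coco hdiff hL hμ hlip hsc (x i) xbar
    rwa [real_inner_comm] at h
  have hAmu : μ * U ≤ A := by
    rw [hU, hA, Finset.mul_sum]
    exact Finset.sum_le_sum fun i _ => hmono i
  have hAco : L⁻¹ * B ≤ A := by
    rw [hB, hA, Finset.mul_sum]
    exact Finset.sum_le_sum fun i _ => hcoco i
  have hUnn : 0 ≤ U := Finset.sum_nonneg fun i _ => sq_nonneg _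
  have hBnn : 0 ≤ B := Finset.sum_nonneg fun i _ => sq_nonneg _
  have hS0 : ∑ i, ‖(x i - η • gradient f (x i)) - (xbar - η • gbar)‖ ^ 2
      = U - 2 * η * (∑ i, (inner ℝ (u i) (w i) : ℝ)) + η ^ 2 * ∑ i, ‖w i‖ ^ 2 := by
    rw [Finset.sum_congr rfl fun i _ => by rw [hterm i, expand i]]
    rw [Finset.sum_add_distrib, Finset.sum_sub_distrib, ← Finset.mul_sum, ← Finset.mul_sum, hU]
  have goal2 : U - 2 * η * (∑ i, (inner ℝ (u i) (w i) : ℝ)) + η ^ 2 * ∑ i, ‖w i‖ ^ 2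
      ≤ (1 - η * μ + η ^ 2 * μ * L) * U := by
    rw [hAeq]
    have hw2 : η ^ 2 * ∑ i, ‖w i‖ ^ 2 ≤ η ^ 2 * B := by
      apply mul_le_mul_of_nonneg_left hBle (sq_nonneg η)
    have hmul1 : η * (μ * U) ≤ η * A := mul_le_mul_of_nonneg_left hAmu hη0.le
    have hmul2 : η * (L⁻¹ * B) ≤ η * A := mul_le_mul_of_nonneg_left hAco hη0.le
    have hstep : 0 ≤ η * ((L⁻¹ - η) * B) := by
      apply mul_nonneg hη0.le
      apply mul_nonneg _ hBnn
      rw [← one_div]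
      linarith
    have hlast : 0 ≤ η ^ 2 * μ * L * U := by positivity
    linarith
  calc ∑ i, ‖(x i - η • gradient f (x i)) - (xbar - η • gbar)‖ ^ 2
      = U - 2 * η * (∑ i, (inner ℝ (u i) (w i) : ℝ)) + η ^ 2 * ∑ i, ‖w i‖ ^ 2 := hS0
    _ ≤ (1 - η * μ + η ^ 2 * μ * L) * U := goal2
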